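/- For every α ∈ (0,1) and x ∈ ℝ^k, there exists a unique λ ∈ ℝ such that Σ_{i=1}^k s_α(x_i − α + λ) = 1, where s_α is the inverse of φ_α(z) = (1−α)z + α log z. -/
import Mathlib

theorem stmt12 {k : ℕ} (hk : 0 < k) (α : ℝ) (hα : α ∈ Set.Ioo (0 : ℝ) 1)
    (x : Fin k → ℝ) (s : ℝ → ℝ)
    (hs_pos : ∀ y, 0 < s y)
    (hs_inv : ∀ y, (1 - α) * s y + α * Real.log (s y) = y) :
    ∃! lam : ℝ, ∑ i, s (x i - α + lam) = 1 := by
  obtain ⟨hα0, hα1⟩ := hα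
  have h1α : 0 < 1 - α := by linarith
  set φ : ℝ → ℝ := fun z => (1 - α) * z + α * Real.log z with hφ
  have hφ_mono : StrictMonoOn φ (Set.Ioi 0) := by
    intro z1 hz1 z2 hz2 h12
    have := Real.log_lt_log (by exact hz1) h12
    have h1 : (1 - α) * z1 < (1 - α) * z2 := by nlinarith
    have h2 : α * Real.log z1 < α * Real.log z2 := by nlinarith
    simp only [hφ]
    linarith
  have hφs : ∀ y, φ (s y) = y := fun y => hs_inv y
  have hs_mono : StrictMono s := by
    intro y1 y2 h12
    by_contra h
    push_neg at h
    have := hφ_mono.monotoneOn (Set.mem_Ioi.2 (hs_pos y2)) (Set.mem_Ioi.2 (hs_pos y1)) h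
    rw [hφs, hφs] at this
    linarith
  have hs_surj : ∀ z : ℝ, 0 < z → s (φ z) = z := by
    intro z hz
    have h := hφs (φ z)
    exact hφ_mono.injOn (Set.mem_Ioi.2 (hs_pos (φ z))) (Set.mem_Ioi.2 hz) h
  have hs_cont : Continuous s := by
    rw [continuous_iff_continuousAt]
    intro a
    apply (hs_mono.strictMonoOn Set.univ).continuousAt_of_image_mem_nhds Filter.univ_mem
    rw [Set.image_univ]
    have hrange : Set.Ioi (0:ℝ) ⊆ Set.range s := by
      intro z hz
      exact ⟨φ z, hs_surj z hz⟩
    exact Filter.mem_of_superset (isOpen_Ioi.mem_nhds (hs_pos a)) hrange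
  set f : ℝ → ℝ := fun lam => ∑ i, s (x i - α + lam) with hf
  have hne : (Finset.univ : Finset (Fin k)).Nonempty := by
    simpa [Finset.univ_nonempty_iff] using Fin.pos_iff_nonempty.1 hk
  have hf_mono : StrictMono f := by
    intro l1 l2 h12
    apply Finset.sum_lt_sum_of_nonempty hne
    intro i _
    exact hs_mono (by linarith)
  have hf_cont : Continuous f := by
    apply continuous_finset_sum
    intro i _
    exact hs_cont.comp (continuous_const.add continuous_id)
  -- bounds
  obtain ⟨i0, -⟩ := id hne
  set b : ℝ := φ 1 - (x i0 - α) with hb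
  have hfb : 1 ≤ f b := by
    have h1 : s (x i0 - α + b) = 1 := by
      rw [hb]
      have : x i0 - α + (φ 1 - (x i0 - α)) = φ 1 := by ring
      rw [this]
      exact hs_surj 1 one_pos
    calc (1:ℝ) = s (x i0 - α + b) := h1.symm
    _ ≤ f b := Finset.single_le_sum (f := fun i => s (x i - α + b)) (fun i _ => (hs_pos _).le) (Finset.mem_univ i0)
  set M : ℝ := Finset.univ.sup' hne (fun i => x i - α) with hM
  set a : ℝ := φ (1 / k) - M with ha
  have hk' : (0:ℝ) < 1 / k := by positivity
  have hfa : f a ≤ 1 := by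
    have hle : ∀ i ∈ Finset.univ, s (x i - α + a) ≤ 1 / k := by
      intro i _
      have hiM : x i - α ≤ M := Finset.le_sup' (f := fun i => x i - α) (Finset.mem_univ i)
      have : x i - α + a ≤ φ (1 / k) := by rw [ha]; linarith
      calc s (x i - α + a) ≤ s (φ (1 / k)) := hs_mono.monotone this
      _ = 1 / k := hs_surj _ hk'
    calc f a ≤ ∑ _i : Fin k, (1 / k : ℝ) := Finset.sum_le_sum hle
    _ = k * (1 / k) := by rw [Finset.sum_const]; simp [mul_comm]
    _ = 1 := by field_simp
  have hab : a ≤ b := by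
    by_contra h
    push_neg at h
    have := hf_mono h
    linarith
  obtain ⟨lam, hlam_mem, hlam⟩ := intermediate_value_Icc hab hf_cont.continuousOn
    (Set.mem_Icc.2 ⟨hfa, hfb⟩)
  exact ⟨lam, hlam, fun y hy => hf_mono.injective (hy.trans hlam.symm)⟩
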